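/- If the non-singular action Γ ↷ (X,μ) of a countable group is essentially free, then the natural *-homomorphism Φ from the algebraic crossed product L^∞(X) ⋊_alg Γ to B(L²X), given by Φ(f,γ) = M_f π(γ), is injective. -/
import Mathlib


open MeasureTheory

/-- If a non-singular action of a countable group `Γ` on `(X,μ)` is essentially free, then the
natural `*`-homomorphism `Φ : L^∞X ⋊_alg Γ → B(L²X)`, `Φ(f,γ) = M_f π(γ)`, is injective:
if a finite sum `Σ_{γ∈S} M_{f_γ} π(γ)` vanishes, then all coefficients `f_γ` vanish a.e. -/
theorem stmt7 {X : Type*} [MeasurableSpace X] [StandardBorelSpace X]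
    {Γ : Type*} [Group Γ] [Countable Γ] [MulAction Γ X]
    (μ : Measure X) [SigmaFinite μ]
    (hmeas : ∀ γ : Γ, Measurable fun x : X => γ • x)
    (hns : ∀ γ : Γ, Measure.map (γ • ·) μ ≪ μ ∧ μ ≪ Measure.map (γ • ·) μ)
    (hfree : ∀ γ : Γ, γ ≠ 1 → ∀ᵐ x ∂μ, γ • x ≠ x)
    (π : Γ → (Lp ℂ 2 μ ≃ₗᵢ[ℂ] Lp ℂ 2 μ))
    (hπ : ∀ (γ : Γ) (ξ : Lp ℂ 2 μ),
      (π γ ξ : X → ℂ) =ᵐ[μ]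
        fun x => (Real.sqrt (((Measure.map (γ • ·) μ).rnDeriv μ x).toReal)) •
          (ξ : X → ℂ) (γ⁻¹ • x))
    (S : Finset Γ) (f : Γ → X → ℂ)
    (hf : ∀ γ, Measurable (f γ)) (hfb : ∀ γ, ∃ C : ℝ, ∀ x, ‖f γ x‖ ≤ C)
    (hker : ∀ ξ : Lp ℂ 2 μ, ∀ᵐ x ∂μ, ∑ γ ∈ S, f γ x * (π γ ξ : X → ℂ) x = 0) :
    ∀ γ ∈ S, f γ =ᵐ[μ] 0 := by
  classical
  -- transfer of null sets along the action
  have hinv : ∀ (γ : Γ) (N : Set X), μ N = 0 → ∀ᵐ x ∂μ, γ⁻¹ • x ∉ N := by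
    intro γ N hN
    obtain ⟨N', hNN', hN'm, hN'0⟩ := exists_measurable_superset_of_null hN
    have hM : MeasurableSet ((fun x => γ⁻¹ • x) ⁻¹' N') := hN'm.preimage (hmeas γ⁻¹)
    have hmap : (Measure.map (γ • ·) μ) ((fun x => γ⁻¹ • x) ⁻¹' N') = 0 := by
      rw [Measure.map_apply (hmeas γ) hM]
      have he : (γ • ·) ⁻¹' ((fun x => γ⁻¹ • x) ⁻¹' N') = N' := by
        ext y; simp [Set.mem_preimage, inv_smul_smul]
      rw [he]; exact hN'0
    have h0 : μ ((fun x => γ⁻¹ • x) ⁻¹' N') = 0 := (hns γ).2 hmap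
    rw [ae_iff]
    refine measure_mono_null ?_ h0
    intro x hx
    simp only [Set.mem_setOf_eq, not_not] at hx
    exact hNN' hx
  -- transfer of a.e. statements along the action
  have htrans : ∀ (γ : Γ) (p : X → Prop), (∀ᵐ y ∂μ, p y) → ∀ᵐ x ∂μ, p (γ⁻¹ • x) := by
    intro γ p hp
    have := hinv γ {y | ¬ p y} (ae_iff.mp hp)
    filter_upwards [this] with x hx
    simpa using hx
  -- a countable separating family of measurable sets, closed under complements
  obtain ⟨𝒜, h𝒜c, h𝒜m, h𝒜sep⟩ := exists_countable_separating X MeasurableSet Set.univ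
  have hℬc : (insert Set.univ (𝒜 ∪ compl '' 𝒜) : Set (Set X)).Countable :=
    ((h𝒜c.union (h𝒜c.image _)).insert _)
  obtain ⟨A, hA⟩ := hℬc.exists_eq_range ⟨_, Set.mem_insert _ _⟩
  have hAm : ∀ k, MeasurableSet (A k) := by
    intro k
    have hk : A k ∈ insert Set.univ (𝒜 ∪ compl '' 𝒜) := hA ▸ Set.mem_range_self k
    rcases hk with h | h | ⟨s, hs, h⟩
    · rw [h]; exact MeasurableSet.univ
    · exact h𝒜m _ h
    · rw [← h]; exact (h𝒜m s hs).compl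
  have hAsep : ∀ x y : X, x ≠ y → ∃ k, x ∈ A k ∧ y ∉ A k := by
    intro x y hxy
    have hex : ∃ s ∈ 𝒜, ¬ (x ∈ s ↔ y ∈ s) := by
      by_contra h2
      push_neg at h2
      exact hxy (h𝒜sep x trivial y trivial fun s hs => h2 s hs)
    obtain ⟨s, hs, hneq⟩ := hex
    by_cases hxs : x ∈ s
    · have hys : y ∉ s := fun hy => hneq ⟨fun _ => hy, fun _ => hxs⟩
      have hmem : s ∈ insert Set.univ (𝒜 ∪ compl '' 𝒜) :=
        Set.mem_insert_of_mem _ (Set.mem_union_left _ hs)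
      rw [hA] at hmem
      obtain ⟨k, hk⟩ := hmem
      exact ⟨k, hk.symm ▸ hxs, hk.symm ▸ hys⟩
    · have hys : y ∈ s := by
        by_contra hy
        exact hneq ⟨fun h => absurd h hxs, fun h => absurd h hy⟩
      have hmem : sᶜ ∈ insert Set.univ (𝒜 ∪ compl '' 𝒜) :=
        Set.mem_insert_of_mem _ (Set.mem_union_right _ ⟨s, hs, rfl⟩)
      rw [hA] at hmem
      obtain ⟨k, hk⟩ := hmem
      refine ⟨k, ?_, ?_⟩
      · rw [hk]; exact hxs
      · rw [hk]; simpa using hys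
  -- the countable family of test sets and test vectors
  set T : Finset ℕ × ℕ → Set X := fun p => (⋂ k ∈ p.1, A k) ∩ spanningSets μ p.2 with hT
  have hTm : ∀ p, MeasurableSet (T p) := fun p =>
    (MeasurableSet.biInter p.1.countable_toSet fun k _ => hAm k).inter
      (measurableSet_spanningSets μ p.2)
  have hTfin : ∀ p, μ (T p) ≠ ⊤ := fun p =>
    ((measure_mono Set.inter_subset_right).trans_lt (measure_spanningSets_lt_top μ p.2)).ne
  set ξ : Finset ℕ × ℕ → Lp ℂ 2 μ := fun p => indicatorConstLp 2 (hTm p) (hTfin p) (1 : ℂ)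
    with hξ
  -- key pointwise identity for each test vector
  have key : ∀ p : Finset ℕ × ℕ, ∀ᵐ x ∂μ,
      ∑ γ ∈ S, f γ x * (Real.sqrt (((Measure.map (γ • ·) μ).rnDeriv μ x).toReal) •
        (T p).indicator (fun _ => (1 : ℂ)) (γ⁻¹ • x)) = 0 := by
    intro p
    have h2 : ∀ᵐ x ∂μ, ∀ γ ∈ S, (π γ (ξ p) : X → ℂ) x =
        Real.sqrt (((Measure.map (γ • ·) μ).rnDeriv μ x).toReal) •
          (T p).indicator (fun _ => (1 : ℂ)) (γ⁻¹ • x) := by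
      rw [ae_all_iff]
      intro γ
      by_cases hγS : γ ∈ S
      swap
      · exact Filter.Eventually.of_forall fun x h => absurd h hγS
      refine Filter.Eventually.mono ?_ (fun x h _ => h)
      have h3 : ∀ᵐ x ∂μ, (ξ p : X → ℂ) (γ⁻¹ • x) =
          (T p).indicator (fun _ => (1 : ℂ)) (γ⁻¹ • x) :=
        htrans γ (fun y => (ξ p : X → ℂ) y = (T p).indicator (fun _ => (1 : ℂ)) y)
          indicatorConstLp_coeFn
      filter_upwards [hπ γ (ξ p), h3] with x hx h3x
      calc (π γ (ξ p) : X → ℂ) x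
          = Real.sqrt (((Measure.map (γ • ·) μ).rnDeriv μ x).toReal) •
            (ξ p : X → ℂ) (γ⁻¹ • x) := hx
        _ = _ := by rw [h3x]
    filter_upwards [hker (ξ p), h2] with x h1x h2x
    calc ∑ γ ∈ S, f γ x * (Real.sqrt (((Measure.map (γ • ·) μ).rnDeriv μ x).toReal) •
          (T p).indicator (fun _ => (1 : ℂ)) (γ⁻¹ • x))
        = ∑ γ ∈ S, f γ x * (π γ (ξ p) : X → ℂ) x :=
          Finset.sum_congr rfl fun γ hγ => by rw [h2x γ hγ]
      _ = 0 := h1x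
  -- positivity and finiteness of the Radon-Nikodym derivative
  have hDpos : ∀ γ : Γ, ∀ᵐ x ∂μ,
      0 < (((Measure.map (γ • ·) μ).rnDeriv μ) x).toReal := by
    intro γ
    haveI hsf : SigmaFinite (Measure.map (γ • ·) μ) := by
      let e : X ≃ᵐ X := ⟨⟨(γ • ·), (γ⁻¹ • ·), fun x => inv_smul_smul γ x,
        fun x => smul_inv_smul γ x⟩, hmeas γ, hmeas γ⁻¹⟩
      exact e.sigmaFinite_map
    have h1 : ∀ᵐ x ∂(Measure.map (γ • ·) μ),
        0 < (Measure.map (γ • ·) μ).rnDeriv μ x := Measure.rnDeriv_pos (hns γ).1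
    have h2 : ∀ᵐ x ∂μ, 0 < (Measure.map (γ • ·) μ).rnDeriv μ x := (hns γ).2.ae_le h1
    have h3 := Measure.rnDeriv_lt_top (Measure.map (γ • ·) μ) μ
    filter_upwards [h2, h3] with x hx hx'
    exact ENNReal.toReal_pos hx.ne' hx'.ne
  -- a.e. distinctness of orbit points
  have hdist : ∀ᵐ x ∂μ, ∀ γ γ' : Γ, γ ≠ γ' → γ⁻¹ • x ≠ γ'⁻¹ • x := by
    rw [ae_all_iff]
    intro γ
    rw [ae_all_iff]
    intro γ'
    by_cases hne : γ = γ'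
    · filter_upwards with x h; exact absurd hne h
    · have hδ : γ' * γ⁻¹ ≠ 1 := fun h => hne (mul_inv_eq_one.mp h).symm
      filter_upwards [hfree (γ' * γ⁻¹) hδ] with x hx
      intro _ heq
      apply hx
      rw [mul_smul, heq, smul_inv_smul]
  -- combine everything into one a.e. statement
  have master := (ae_all_iff.mpr key).and ((ae_all_iff.mpr hDpos).and hdist)
  intro γ₀ hγ₀
  filter_upwards [master] with x hx
  obtain ⟨hx1, hx2, hx3⟩ := hx
  show f γ₀ x = 0
  -- choose a separating set for each other group element
  choose n hn1 hn2 using fun γ : {γ // γ ∈ S.erase γ₀} =>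
    hAsep (γ₀⁻¹ • x) ((γ : Γ)⁻¹ • x)
      (hx3 γ₀ γ (fun h => (Finset.mem_erase.mp γ.2).1 h.symm))
  obtain ⟨m, hm⟩ : ∃ m, γ₀⁻¹ • x ∈ spanningSets μ m := by
    have : γ₀⁻¹ • x ∈ ⋃ i, spanningSets μ i := by
      rw [iUnion_spanningSets]; trivial
    exact Set.mem_iUnion.mp this
  set t : Finset ℕ := (S.erase γ₀).attach.image n with ht
  have hmemT : γ₀⁻¹ • x ∈ T (t, m) := by
    refine ⟨?_, hm⟩
    simp only [Set.mem_iInter]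
    intro k hk
    obtain ⟨γ, _, rfl⟩ := Finset.mem_image.mp hk
    exact hn1 γ
  have hnotmem : ∀ γ ∈ S, γ ≠ γ₀ → γ⁻¹ • x ∉ T (t, m) := by
    intro γ hγ hne hmem'
    have hγe : γ ∈ S.erase γ₀ := Finset.mem_erase.mpr ⟨hne, hγ⟩
    have hin : γ⁻¹ • x ∈ A (n ⟨γ, hγe⟩) := by
      have h := hmem'.1
      simp only [Set.mem_iInter] at h
      exact h _ (Finset.mem_image.mpr ⟨⟨γ, hγe⟩, Finset.mem_attach _ _, rfl⟩)
    exact hn2 ⟨γ, hγe⟩ hin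
  have heq := hx1 (t, m)
  have hsum : ∑ γ ∈ S, f γ x * (Real.sqrt (((Measure.map (γ • ·) μ).rnDeriv μ x).toReal) •
        (T (t, m)).indicator (fun _ => (1 : ℂ)) (γ⁻¹ • x))
      = f γ₀ x * (Real.sqrt (((Measure.map (γ₀ • ·) μ).rnDeriv μ x).toReal) •
        (T (t, m)).indicator (fun _ => (1 : ℂ)) (γ₀⁻¹ • x)) := by
    refine Finset.sum_eq_single γ₀ ?_ ?_
    · intro γ hγ hne
      rw [Set.indicator_of_notMem (hnotmem γ hγ hne)]
      simp
    · intro h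
      exact absurd hγ₀ h
  rw [hsum, Set.indicator_of_mem hmemT] at heq
  have hg : Real.sqrt (((Measure.map (γ₀ • ·) μ).rnDeriv μ x).toReal) ≠ 0 :=
    (Real.sqrt_pos.mpr (hx2 γ₀)).ne'
  rw [Complex.real_smul, mul_one] at heq
  rcases mul_eq_zero.mp heq with h | h
  · exact h
  · exact absurd h (Complex.ofReal_ne_zero.mpr hg)
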